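/- Let β > 1, L > 0, n ≥ 4, and define F_{β,L}(x) = (x·f_{β,L}(x))^{1/(2β+1)} where f_{β,L}(x) = βx^{2β} for x ≤ L and f_{β,L}(x) = nβ²L^{2β−1}x for x > L. Then nβ·φ_{β,L}(x) ≥ F_{β,L}(x)^β for all x ≥ 0. -/

import Mathlib

/-- Linearized power function. -/
noncomputable def phi (β L x : ℝ) : ℝ :=
  if x ≤ L then x ^ β else β * L ^ (β-1) * (x - L) + L ^ β

/-- The comparison function, linear for large `x`. -/
noncomputable def ffun (n : ℕ) (β L x : ℝ) : ℝ :=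
  if x ≤ L then β * x ^ (2*β) else (n:ℝ) * β^2 * L ^ (2*β-1) * x

/-- `F_{β,L}(x) = (x f_{β,L}(x))^{1/(2β+1)}`. -/
noncomputable def Ffun (n : ℕ) (β L x : ℝ) : ℝ := (x * ffun n β L x) ^ (1/(2*β+1))

private lemma aux_rpow_le (A b β c : ℝ) (hA : 0 ≤ A) (hb : 0 ≤ b) (hc : 0 < c)
    (h : A ^ β ≤ b ^ c) : (A ^ (1/c)) ^ β ≤ b := by
  have h1 : (A ^ (1/c)) ^ β = (A ^ β) ^ (1/c) := by
    rw [← Real.rpow_mul hA, ← Real.rpow_mul hA]; ring_nf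
  rw [h1]
  calc (A ^ β) ^ (1/c) ≤ (b ^ c) ^ (1/c) :=
        Real.rpow_le_rpow (Real.rpow_nonneg hA β) h (by positivity)
    _ = b := by
        rw [← Real.rpow_mul hb]
        field_simp
        simp

theorem stmt7 (n : ℕ) (hn : 4 ≤ n) (β L : ℝ) (hβ : 1 < β) (hL : 0 < L)
    (x : ℝ) (hx : 0 ≤ x) :
    (n:ℝ) * β * phi β L x ≥ (Ffun n β L x) ^ β := by
  have hβ0 : (0:ℝ) < β := by linarith
  have hc : (0:ℝ) < 2*β+1 := by linarith
  have hn1 : (1:ℝ) ≤ (n:ℝ) := by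
    have h : 1 ≤ n := by omega
    exact_mod_cast h
  have hn0 : (0:ℝ) ≤ (n:ℝ) := by positivity
  rcases eq_or_lt_of_le hx with hx0 | hx0
  · -- x = 0
    rw [← hx0]
    have hF : Ffun n β L 0 = 0 := by
      unfold Ffun; rw [zero_mul, Real.zero_rpow (by positivity)]
    rw [hF, Real.zero_rpow (ne_of_gt hβ0)]
    unfold phi
    rw [if_pos hL.le, Real.zero_rpow (ne_of_gt hβ0), mul_zero]
  · by_cases hxL : x ≤ L
    · -- small x
      have hxf : x * ffun n β L x = β * x ^ (2*β+1) := by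
        unfold ffun
        rw [if_pos hxL, Real.rpow_add hx0 (2*β) 1, Real.rpow_one]; ring
      have hAnn : (0:ℝ) ≤ β * x ^ (2*β+1) := by positivity
      unfold phi Ffun
      rw [if_pos hxL, hxf, ge_iff_le]
      apply aux_rpow_le _ _ _ _ hAnn (by positivity) hc
      rw [Real.mul_rpow hβ0.le (Real.rpow_nonneg hx _), ← Real.rpow_mul hx,
        Real.mul_rpow (mul_nonneg hn0 hβ0.le) (Real.rpow_nonneg hx _),
        Real.mul_rpow hn0 hβ0.le, ← Real.rpow_mul hx, mul_comm β (2*β+1)]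
      have h1 : β ^ β ≤ β ^ (2*β+1) := Real.rpow_le_rpow_of_exponent_le hβ.le (by linarith)
      have h2 : (1:ℝ) ≤ (n:ℝ) ^ (2*β+1) := Real.one_le_rpow hn1 hc.le
      have hxp : (0:ℝ) ≤ x ^ ((2*β+1)*β) := Real.rpow_nonneg hx _
      have hβp : (0:ℝ) ≤ β ^ (2*β+1) := Real.rpow_nonneg hβ0.le _
      calc β ^ β * x ^ ((2*β+1)*β) ≤ β ^ (2*β+1) * x ^ ((2*β+1)*β) :=
            mul_le_mul_of_nonneg_right h1 hxp
        _ = 1 * (β ^ (2*β+1) * x ^ ((2*β+1)*β)) := by ring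
        _ ≤ (n:ℝ) ^ (2*β+1) * (β ^ (2*β+1) * x ^ ((2*β+1)*β)) := by
            apply mul_le_mul_of_nonneg_right h2 (by positivity)
        _ = (n:ℝ) ^ (2*β+1) * β ^ (2*β+1) * x ^ ((2*β+1)*β) := by ring
    · -- large x : x > L
      push_neg at hxL
      have hx0' : (0:ℝ) < x := lt_trans hL hxL
      have hLb : L ^ β = L ^ (β-1) * L := by
        rw [← Real.rpow_add_one hL.ne']; congr 1; ring
      have hLbn : (0:ℝ) ≤ L ^ (β-1) := Real.rpow_nonneg hL.le _
      have hphi : L ^ (β-1) * x ≤ phi β L x := by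
        unfold phi
        rw [if_neg (not_le.mpr hxL), hLb]
        nlinarith [mul_nonneg (mul_nonneg (by linarith : (0:ℝ) ≤ β-1) hLbn)
          (by linarith : (0:ℝ) ≤ x - L)]
      have hA2 : x * ffun n β L x = (n:ℝ) * β^(2:ℝ) * L^(2*β-1) * x^(2:ℝ) := by
        unfold ffun
        rw [if_neg (not_le.mpr hxL)]
        rw [show (2:ℝ) = 1+1 by norm_num, Real.rpow_add hβ0, Real.rpow_add hx0',
          Real.rpow_one, Real.rpow_one]
        ring
      have step : (Ffun n β L x) ^ β ≤ (n:ℝ) * β * (L^(β-1) * x) := by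
        unfold Ffun
        rw [hA2]
        have hL2 : (0:ℝ) ≤ L ^ (2*β-1) := Real.rpow_nonneg hL.le _
        apply aux_rpow_le _ _ _ _ (by positivity) (by positivity) hc
        rw [Real.mul_rpow (by positivity) (Real.rpow_nonneg hx _),
          Real.mul_rpow (by positivity) hL2,
          Real.mul_rpow hn0 (Real.rpow_nonneg hβ0.le _),
          ← Real.rpow_mul hβ0.le, ← Real.rpow_mul hL.le, ← Real.rpow_mul hx,
          Real.mul_rpow (by positivity) (by positivity),
          Real.mul_rpow hn0 hβ0.le,
          Real.mul_rpow hLbn hx,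
          ← Real.rpow_mul hL.le]
        have hLsplit : L ^ ((2*β-1)*β) = L ^ ((β-1)*(2*β+1)) * L := by
          rw [← Real.rpow_add_one hL.ne']; congr 1; ring
        have hxsplit : x ^ (2*β+1) = x ^ ((2:ℝ)*β) * x := by
          rw [← Real.rpow_add_one hx0'.ne']
        have h1 : (n:ℝ) ^ β ≤ (n:ℝ) ^ (2*β+1) :=
          Real.rpow_le_rpow_of_exponent_le hn1 (by linarith)
        have h2 : β ^ ((2:ℝ)*β) ≤ β ^ (2*β+1) :=
          Real.rpow_le_rpow_of_exponent_le hβ.le (by linarith)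
        have e1 : (0:ℝ) ≤ (n:ℝ) ^ (2*β+1) := Real.rpow_nonneg hn0 _
        have e2 : (0:ℝ) ≤ β ^ (2*β+1) := Real.rpow_nonneg hβ0.le _
        have e3 : (0:ℝ) ≤ L ^ ((β-1)*(2*β+1)) := Real.rpow_nonneg hL.le _
        have e4 : (0:ℝ) ≤ x ^ ((2:ℝ)*β) := Real.rpow_nonneg hx _
        have e5 : (0:ℝ) ≤ (n:ℝ) ^ β := Real.rpow_nonneg hn0 _
        have e6 : (0:ℝ) ≤ β ^ ((2:ℝ)*β) := Real.rpow_nonneg hβ0.le _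
        calc (n:ℝ) ^ β * β ^ ((2:ℝ)*β) * L ^ ((2*β-1)*β) * x ^ ((2:ℝ)*β)
            = ((n:ℝ) ^ β * β ^ ((2:ℝ)*β)) * (L ^ ((β-1)*(2*β+1)) * x ^ ((2:ℝ)*β)) * L := by
              rw [hLsplit]; ring
          _ ≤ ((n:ℝ) ^ (2*β+1) * β ^ (2*β+1)) * (L ^ ((β-1)*(2*β+1)) * x ^ ((2:ℝ)*β)) * x := by
              apply mul_le_mul _ hxL.le hL.le (by positivity)
              exact mul_le_mul_of_nonneg_right (mul_le_mul h1 h2 e6 e1)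
                (mul_nonneg e3 e4)
          _ = (n:ℝ) ^ (2*β+1) * β ^ (2*β+1) * (L ^ ((β-1)*(2*β+1)) * x ^ (2*β+1)) := by
              rw [hxsplit]; ring
      calc (Ffun n β L x) ^ β ≤ (n:ℝ) * β * (L^(β-1) * x) := step
        _ ≤ (n:ℝ) * β * phi β L x := by
            apply mul_le_mul_of_nonneg_left hphi (by positivity)
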